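/- Let ι be a type, c : ι → ℕ, n : ι → ℤ, and w : ι → ℝ with w(i) > 0 for every i. Assume that for every y > 0 the family i ↦ c(i)·e^{−2π w(i) y} is summable, and define f : ℍ → ℂ by f(τ) = Σ'_i c(i) · e^{2πi n(i) Re τ} · e^{−2π w(i) Im τ}. If f(−1/τ) = f(τ) for all τ ∈ ℍ, then c(i) = 0 for all i (so f ≡ 0). In other words, there exist no nonzero non-holomorphic cuspidal functions of weight 0 whose Fourier coefficients are simultaneously discrete (τ₂-independent), nonnegative, and integral. -/

import Mathlib

open scoped MatrixGroups UpperHalfPlane Real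
open Complex

noncomputable def impt (y : ℝ) (hy : 0 < y) : ℍ :=
  ⟨Complex.I * y, by simpa using hy⟩

lemma impt_re (y : ℝ) (hy : 0 < y) : (impt y hy).re = 0 := by
  simp [impt, UpperHalfPlane.re]

lemma impt_im (y : ℝ) (hy : 0 < y) : (impt y hy).im = y := by
  simp [impt, UpperHalfPlane.im]

lemma impt_S (y : ℝ) (hy : 0 < y) :
    ModularGroup.S • impt y hy = impt (1 / y) (by positivity) := by
  rw [UpperHalfPlane.modular_S_smul]
  apply UpperHalfPlane.ext
  show (-(Complex.I * y) : ℂ)⁻¹ = Complex.I * ((1 : ℝ) / y : ℝ)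
  have hy' : (y : ℂ) ≠ 0 := by exact_mod_cast hy.ne'
  field_simp
  simp [Complex.ext_iff]
  exact (mul_inv_cancel₀ hy.ne').symm

/-- There are no nonzero non-holomorphic cuspidal functions of weight 0 whose Fourier
coefficients are discrete, nonnegative, and integral. -/
theorem stmt_1 {ι : Type*} (c : ι → ℕ) (n : ι → ℤ) (w : ι → ℝ)
    (hw : ∀ i, 0 < w i)
    (hsum : ∀ y : ℝ, 0 < y →
      Summable fun i => (c i : ℝ) * Real.exp (-(2 * Real.pi * w i * y)))
    (f : ℍ → ℂ)
    (hf : ∀ τ : ℍ, f τ = ∑' i, (c i : ℂ) *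
      Complex.exp (2 * (Real.pi : ℂ) * Complex.I * (n i : ℂ) * (τ.re : ℂ)) *
      Complex.exp (-(2 * (Real.pi : ℂ) * (w i : ℂ) * (τ.im : ℂ))))
    (hS : ∀ τ : ℍ, f (ModularGroup.S • τ) = f τ) :
    ∀ i, c i = 0 := by
  set g : ℝ → ℝ := fun y => ∑' i, (c i : ℝ) * Real.exp (-(2 * Real.pi * w i * y)) with hg
  -- value of f on the imaginary axis
  have key : ∀ (y : ℝ) (hy : 0 < y), f (impt y hy) = (g y : ℂ) := by
    intro y hy
    rw [hf, hg, Complex.ofReal_tsum]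
    refine tsum_congr fun i => ?_
    rw [impt_re, impt_im]
    push_cast
    rw [mul_zero, Complex.exp_zero, mul_one]
  -- inversion symmetry on the imaginary axis
  have geq : ∀ (y : ℝ) (hy : 0 < y), g y = g (1 / y) := by
    intro y hy
    have := hS (impt y hy)
    rw [impt_S y hy, key y hy, key (1 / y) (by positivity)] at this
    exact_mod_cast this.symm
  -- g is antitone on positives
  have gmono : ∀ a b : ℝ, 0 < a → a ≤ b → g b ≤ g a := by
    intro a b ha hab
    refine Summable.tsum_le_tsum (fun i => ?_) (hsum b (ha.trans_le hab)) (hsum a ha)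
    refine mul_le_mul_of_nonneg_left (Real.exp_le_exp.2 ?_) (Nat.cast_nonneg _)
    have h := mul_le_mul_of_nonneg_left hab (show (0:ℝ) ≤ 2 * Real.pi * w i by have := hw i; positivity)
    linarith
  -- g is constant on [1, ∞)
  have gconst : ∀ y : ℝ, 1 ≤ y → g y = g 1 := by
    intro y hy
    have hy0 : (0:ℝ) < y := lt_of_lt_of_le one_pos hy
    have h1 : g y ≤ g 1 := gmono 1 y one_pos hy
    have h2 : g 1 ≤ g (1 / y) := gmono (1 / y) 1 (by positivity) (by
      rw [div_le_one hy0]; exact hy)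
    rw [← geq y hy0] at h2
    linarith
  -- g tends to 0 at infinity
  have glim : Filter.Tendsto g Filter.atTop (nhds 0) := by
    have h0 : (0:ℝ) = ∑' (i : ι), (0:ℝ) := by simp
    rw [hg, h0]
    refine tendsto_tsum_of_dominated_convergence (hsum 1 one_pos) (fun i => ?_) ?_
    · have h1 : Filter.Tendsto (fun y : ℝ => (2 * Real.pi * w i) * y)
          Filter.atTop Filter.atTop :=
        Filter.Tendsto.const_mul_atTop (by have := hw i; positivity) Filter.tendsto_id
      have h2 : Filter.Tendsto (fun y : ℝ => -(2 * Real.pi * w i * y))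
          Filter.atTop Filter.atBot :=
        (Filter.tendsto_neg_atTop_atBot.comp h1).congr (fun y => by simp [mul_assoc])
      simpa using (Real.tendsto_exp_atBot.comp h2).const_mul (c i : ℝ)
    · filter_upwards [Filter.eventually_ge_atTop (1:ℝ)] with y hy i
      have hnn : (0:ℝ) ≤ (c i : ℝ) * Real.exp (-(2 * Real.pi * w i * y)) := by positivity
      rw [Real.norm_of_nonneg hnn]
      refine mul_le_mul_of_nonneg_left (Real.exp_le_exp.2 ?_) (Nat.cast_nonneg _)
      have h := mul_le_mul_of_nonneg_left hy (show (0:ℝ) ≤ 2 * Real.pi * w i by have := hw i; positivity)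
      linarith
  -- hence g 1 = 0
  have g1 : g 1 = 0 := by
    have : Filter.Tendsto g Filter.atTop (nhds (g 1)) := by
      refine Filter.Tendsto.congr' ?_ tendsto_const_nhds
      filter_upwards [Filter.eventually_ge_atTop (1:ℝ)] with y hy
      exact (gconst y hy).symm
    exact tendsto_nhds_unique this glim
  -- conclude each coefficient vanishes
  intro i
  have hterm : (c i : ℝ) * Real.exp (-(2 * Real.pi * w i * 1)) ≤ 0 := by
    rw [← g1, hg]
    exact Summable.le_tsum (hsum 1 one_pos) i (fun j _ => by positivity)
  have hnn : (0:ℝ) ≤ (c i : ℝ) * Real.exp (-(2 * Real.pi * w i * 1)) := by positivity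
  have : (c i : ℝ) * Real.exp (-(2 * Real.pi * w i * 1)) = 0 := le_antisymm hterm hnn
  have := mul_eq_zero.1 this
  rcases this with h | h
  · exact_mod_cast h
  · exact absurd h (Real.exp_ne_zero _)
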